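/- Let k ≥ 1 be an integer, let j_0 ≥ 0 be an integer, and let α ∈ (j_0, j_0 + 1). Then the function c_{k+1} is differentiable at α and its derivative satisfies (d/dα) c_{k+1}(α) = −(k(k+1)/α²)·(1 − 1/α)^{k−1}·c_k(α − 1). -/

import Mathlib

open Finset

/-- `ck k α = Σ_{j ∈ ℕ, 0 ≤ j < α} (-1)^j C(k,j) (1 - j/α)^{k-1}` (empty when `α ≤ 0`). -/
noncomputable def ck (k : ℕ) (α : ℝ) : ℝ :=
  ∑ j ∈ Finset.range ⌈α⌉₊, (-1 : ℝ) ^ j * (k.choose j : ℝ) * (1 - (j : ℝ) / α) ^ (k - 1)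

/-- For `k ≥ 1` and `α` in an open interval `(j₀, j₀+1)` between consecutive integers,
`c_{k+1}` is differentiable at `α` with derivative
`-(k(k+1)/α²) (1 - 1/α)^{k-1} c_k(α-1)`. -/
theorem ck_hasDerivAt (k : ℕ) (hk : 1 ≤ k) (j0 : ℕ) (α : ℝ)
    (h1 : (j0 : ℝ) < α) (h2 : α < (j0 : ℝ) + 1) :
    HasDerivAt (fun x : ℝ => ck (k + 1) x)
      (-((k : ℝ) * ((k : ℝ) + 1) / α ^ 2) * (1 - 1 / α) ^ (k - 1) * ck k (α - 1)) α := by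
  have hα0 : (0:ℝ) < α := (Nat.cast_nonneg j0).trans_lt h1
  have hαne : α ≠ 0 := ne_of_gt hα0
  -- the local (frozen-ceiling) form of ck (k+1)
  set f : ℝ → ℝ := fun x => ∑ j ∈ Finset.range (j0+1),
      (-1:ℝ)^j * ((k+1).choose j : ℝ) * (1 - (j:ℝ)/x) ^ k with hf
  have heq : (fun x : ℝ => ck (k+1) x) =ᶠ[nhds α] f := by
    filter_upwards [Ioo_mem_nhds h1 h2] with x hx
    have hc : ⌈x⌉₊ = j0 + 1 := by
      rw [Nat.ceil_eq_iff (Nat.succ_ne_zero j0)]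
      refine ⟨by simpa using hx.1, ?_⟩
      push_cast
      exact le_of_lt hx.2
    simp only [ck, hc, hf, Nat.add_sub_cancel]
  -- ceiling of α - 1
  have hc1 : ⌈α - 1⌉₊ = j0 := by
    rcases Nat.eq_zero_or_pos j0 with h | h
    · subst h
      rw [Nat.ceil_eq_zero]
      simp only [Nat.cast_zero, zero_add] at h2
      linarith
    · rw [Nat.ceil_eq_iff (by omega : j0 ≠ 0)]
      constructor
      · have : ((j0 - 1 : ℕ) : ℝ) = (j0 : ℝ) - 1 := by
          push_cast [Nat.cast_sub h]
          ring
        rw [this]; linarith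
      · linarith
  -- termwise derivatives
  have hterm : ∀ j ∈ Finset.range (j0+1),
      HasDerivAt (fun x : ℝ => (-1:ℝ)^j * ((k+1).choose j : ℝ) * (1 - (j:ℝ)/x) ^ k)
        ((-1:ℝ)^j * ((k+1).choose j : ℝ) * ((k:ℝ) * (1 - (j:ℝ)/α) ^ (k-1) * ((j:ℝ)/α^2))) α := by
    intro j _
    have h0 : HasDerivAt (fun x : ℝ => 1 - (j:ℝ)/x) ((j:ℝ)/α^2) α := by
      simp only [div_eq_mul_inv]
      have h := ((hasDerivAt_inv hαne).const_mul (j:ℝ)).const_sub (1:ℝ)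
      convert h using 1
      exacts [rfl, rfl, by ring]
    exact (h0.pow k).const_mul ((-1:ℝ)^j * ((k+1).choose j : ℝ))
  have hsum := HasDerivAt.fun_sum hterm
  refine (HasDerivAt.congr_of_eventuallyEq ?_ heq)
  convert hsum using 1
  -- now compute the sum of derivatives
  rw [Finset.sum_range_succ']
  simp only [Nat.cast_zero, zero_div, mul_zero, add_zero]
  rw [show ck k (α - 1) = ∑ i ∈ Finset.range j0,
      (-1:ℝ)^i * (k.choose i : ℝ) * (1 - (i:ℝ)/(α-1)) ^ (k-1) from by
    simp only [ck, hc1]]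
  rw [Finset.mul_sum]
  apply Finset.sum_congr rfl
  intro i hi
  have hij : i < j0 := Finset.mem_range.mp hi
  have hj1 : (1:ℕ) ≤ j0 := Nat.one_le_iff_ne_zero.mpr (by omega)
  have hα1 : (1:ℝ) < α := by
    have : (1:ℝ) ≤ (j0:ℝ) := by exact_mod_cast hj1
    linarith
  have hαm1 : α - 1 ≠ 0 := by linarith
  have hfac : 1 - ((i:ℝ)+1)/α = (1 - 1/α) * (1 - (i:ℝ)/(α-1)) := by
    field_simp
    ring
  have hc : ((k+1).choose (i+1) : ℝ) * ((i:ℝ)+1) = ((k:ℝ)+1) * (k.choose i : ℝ) := by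
    have h := (Nat.add_one_mul_choose_eq k i).symm
    exact_mod_cast congrArg (Nat.cast : ℕ → ℝ) h
  push_cast
  rw [hfac, mul_pow, pow_succ]
  linear_combination ((-1:ℝ)^i * (k:ℝ) * (1-1/α)^(k-1) * (1-(i:ℝ)/(α-1))^(k-1) / α^2) * hc
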